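/- arXiv:2210.09665 — 3 statements merged into one kernel-verified Lean document; each statement's English description precedes it below -/
import Mathlib

section
/- Every nonzero vector s in the subspace K = {u ∈ ℝⁿ : aᵀu = 0} (with a having no zero entries) can be written as a sum s = Σ_t s^t of vectors each having at most two nonzero entries, each lying in K, and each conformal to s (supp(s^t) ⊆ supp(s), s^t_i s_i ≥ 0 for all i). -/
open Finset

private lemma stmt_10_aux (n : ℕ) (a : Fin n → ℝ) (ha : ∀ i, a i ≠ 0) :
    ∀ k (s : Fin n → ℝ), (univ.filter fun i => s i ≠ 0).card ≤ k →
    (∑ i, a i * s i) = 0 →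
    ∃ (r : ℕ) (v : Fin r → (Fin n → ℝ)),
      s = (∑ t, v t) ∧
      ∀ t, ((univ.filter fun i => v t i ≠ 0).card ≤ 2) ∧
        (∑ i, a i * v t i) = 0 ∧
        (∀ i, s i = 0 → v t i = 0) ∧
        (∀ i, 0 ≤ v t i * s i) := by
  intro k
  induction k with
  | zero =>
    intro s hcard _
    have hs0 : s = 0 := by
      funext i
      simp only [Pi.zero_apply]
      by_contra h
      have hmem : i ∈ univ.filter fun i => s i ≠ 0 := by simp [h]
      have := Finset.card_pos.mpr ⟨i, hmem⟩
      omega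
    exact ⟨0, ![], by simp [hs0], fun t => t.elim0⟩
  | succ k ih =>
    intro s hcard hsum
    by_cases hs : s = 0
    · exact ⟨0, ![], by simp [hs], fun t => t.elim0⟩
    · obtain ⟨i0, hi0⟩ : ∃ i, s i ≠ 0 := by
        by_contra h
        push_neg at h
        exact hs (funext fun i => h i)
      have hi0' : a i0 * s i0 ≠ 0 := mul_ne_zero (ha i0) hi0
      obtain ⟨q, hq⟩ : ∃ q, a q * s q < 0 := by
        by_contra h
        push_neg at h
        have := (Finset.sum_eq_zero_iff_of_nonneg (fun i _ => h i)).mp hsum i0 (mem_univ i0)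
        exact hi0' this
      obtain ⟨p, hp⟩ : ∃ p, 0 < a p * s p := by
        by_contra h
        push_neg at h
        have := (Finset.sum_eq_zero_iff_of_nonpos (fun i _ => h i)).mp hsum i0 (mem_univ i0)
        exact hi0' this
      have hpq : p ≠ q := fun h => absurd (h ▸ hp) (not_lt.mpr hq.le)
      set c : ℝ := min (a p * s p) (-(a q * s q)) with hc_def
      have hc : 0 < c := lt_min hp (by linarith)
      have hcp : c ≤ a p * s p := min_le_left _ _
      have hcq : c ≤ -(a q * s q) := min_le_right _ _
      have hsp : s p ≠ 0 := fun h => by simp [h] at hp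
      have hsq : s q ≠ 0 := fun h => by simp [h] at hq
      set e : Fin n → ℝ := fun i =>
        if i = p then s p * (c / (a p * s p))
        else if i = q then s q * (c / (-(a q * s q))) else 0 with he_def
      have hXp : a p * s p ≠ 0 := ne_of_gt hp
      have hXq : -(a q * s q) ≠ 0 := by linarith
      have hep : a p * e p = c := by
        rw [show e p = s p * (c / (a p * s p)) by simp [he_def]]
        rw [show a p * (s p * (c / (a p * s p))) = c * ((a p * s p) / (a p * s p)) by ring,
          div_self hXp, mul_one]
      have heq : a q * e q = -c := by
        rw [show e q = s q * (c / (-(a q * s q))) by simp [he_def, hpq.symm]]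
        rw [show a q * (s q * (c / (-(a q * s q)))) = -c * ((a q * s q) / (a q * s q)) by ring,
          div_self (show a q * s q ≠ 0 from fun h => hXq (by rw [h, neg_zero])), mul_one]
      have he0 : ∀ i, i ≠ p → i ≠ q → e i = 0 := by
        intro i h1 h2; simp [he_def, h1, h2]
      have hesum : (∑ i, a i * e i) = 0 := by
        have hsub : (∑ i, a i * e i) = ∑ i ∈ ({p, q} : Finset (Fin n)), a i * e i := by
          refine (Finset.sum_subset (Finset.subset_univ _) ?_).symm
          intro i _ hi
          simp only [Finset.mem_insert, Finset.mem_singleton, not_or] at hi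
          rw [he0 i hi.1 hi.2, mul_zero]
        rw [hsub, Finset.sum_pair hpq, hep, heq]
        ring
      set s' : Fin n → ℝ := fun i => s i - e i with hs'_def
      have hsum' : (∑ i, a i * s' i) = 0 := by
        simp only [hs'_def, mul_sub, Finset.sum_sub_distrib, hsum, hesum, sub_zero]
      have hsub' : ∀ i, s i = 0 → s' i = 0 := by
        intro i hi
        have h1 : i ≠ p := fun h => hsp (h ▸ hi)
        have h2 : i ≠ q := fun h => hsq (h ▸ hi)
        simp [hs'_def, he0 i h1 h2, hi]
      -- conformality facts
      have htp : 0 < c / (a p * s p) := div_pos hc hp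
      have htq : 0 < c / (-(a q * s q)) := div_pos hc (by linarith)
      have htp1 : c / (a p * s p) ≤ 1 := (div_le_one hp).mpr hcp
      have htq1 : c / (-(a q * s q)) ≤ 1 := (div_le_one (by linarith)).mpr hcq
      have hevp : e p = s p * (c / (a p * s p)) := by simp [he_def]
      have hevq : e q = s q * (c / (-(a q * s q))) := by simp [he_def, hpq.symm]
      have heconf : ∀ i, 0 ≤ e i * s i := by
        intro i
        by_cases h1 : i = p
        · rw [h1, hevp]
          nlinarith [mul_nonneg htp.le (mul_self_nonneg (s p))]
        · by_cases h2 : i = q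
          · rw [h2, hevq]
            nlinarith [mul_nonneg htq.le (mul_self_nonneg (s q))]
          · rw [he0 i h1 h2, zero_mul]
      have hs'conf : ∀ i, 0 ≤ s' i * s i := by
        intro i
        by_cases h1 : i = p
        · have hv : s' i = s p - s p * (c / (a p * s p)) := by
            simp [hs'_def, h1, hevp]
          rw [hv, h1]
          nlinarith [mul_nonneg (by linarith : (0:ℝ) ≤ 1 - c / (a p * s p))
            (mul_self_nonneg (s p))]
        · by_cases h2 : i = q
          · have hv : s' i = s q - s q * (c / (-(a q * s q))) := by
              simp [hs'_def, h2, hevq]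
            rw [hv, h2]
            nlinarith [mul_nonneg (by linarith : (0:ℝ) ≤ 1 - c / (-(a q * s q)))
              (mul_self_nonneg (s q))]
          · have hv : s' i = s i := by simp [hs'_def, he0 i h1 h2]
            rw [hv]
            exact mul_self_nonneg _
      -- support strictly decreases
      obtain ⟨x, hx1, hx2⟩ : ∃ x, s x ≠ 0 ∧ s' x = 0 := by
        rcases le_total (a p * s p) (-(a q * s q)) with h | h
        · refine ⟨p, hsp, ?_⟩
          have : c = a p * s p := min_eq_left h
          simp [hs'_def, he_def, this, div_self hXp]
        · refine ⟨q, hsq, ?_⟩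
          have : c = -(a q * s q) := min_eq_right h
          simp [hs'_def, he_def, hpq.symm, this, div_self hXq]
      have hcard' : (univ.filter fun i => s' i ≠ 0).card ≤ k := by
        have hss : (univ.filter fun i => s' i ≠ 0) ⊆
            (univ.filter fun i => s i ≠ 0).erase x := by
          intro i hi
          simp only [Finset.mem_filter, Finset.mem_univ, true_and] at hi
          refine Finset.mem_erase.mpr ⟨?_, ?_⟩
          · intro h; exact hi (h ▸ hx2)
          · simp only [Finset.mem_filter, Finset.mem_univ, true_and]
            intro h; exact hi (hsub' i h)
        have hxmem : x ∈ univ.filter fun i => s i ≠ 0 := by simp [hx1]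
        have := Finset.card_le_card hss
        rw [Finset.card_erase_of_mem hxmem] at this
        have hpos := Finset.card_pos.mpr ⟨x, hxmem⟩
        omega
      obtain ⟨r, v, hv, hvp⟩ := ih s' hcard' hsum'
      refine ⟨r + 1, Fin.cons e v, ?_, ?_⟩
      · have hse : s = e + s' := by funext i; simp [hs'_def]
        rw [Fin.sum_cons, ← hv, hse]
      · intro t
        refine Fin.cases ?_ ?_ t
        · simp only [Fin.cons_zero]
          refine ⟨?_, hesum, fun i hi => ?_, heconf⟩
          · have hsub2 : (univ.filter fun i => e i ≠ 0) ⊆ ({p, q} : Finset (Fin n)) := by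
              intro i hi
              simp only [Finset.mem_filter, Finset.mem_univ, true_and] at hi
              by_contra h
              simp only [Finset.mem_insert, Finset.mem_singleton, not_or] at h
              exact hi (he0 i h.1 h.2)
            calc (univ.filter fun i => e i ≠ 0).card ≤ ({p, q} : Finset (Fin n)).card :=
                  Finset.card_le_card hsub2
              _ ≤ 2 := (Finset.card_insert_le _ _).trans (by simp)
          · have h1 : i ≠ p := fun h => hsp (h ▸ hi)
            have h2 : i ≠ q := fun h => hsq (h ▸ hi)
            exact he0 i h1 h2
        · intro j
          simp only [Fin.cons_succ]
          obtain ⟨hc1, hc2, hc3, hc4⟩ := hvp j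
          refine ⟨hc1, hc2, fun i hi => hc3 i (hsub' i hi), fun i => ?_⟩
          by_cases h0 : s' i = 0
          · rw [hc3 i h0, zero_mul]
          · have h1 := hc4 i
            have h2 := hs'conf i
            have hsq2 : 0 < s' i * s' i := mul_self_pos.mpr h0
            nlinarith [mul_nonneg h1 h2]

/-- every nonzero vector s in K = {u : aᵀu = 0}, with a having no
zero entries, decomposes as a sum of vectors of K, each with at most two nonzero
entries, and each conformal to s. -/
theorem stmt_10 (n : ℕ) (a : Fin n → ℝ) (ha : ∀ i, a i ≠ 0)
    (s : Fin n → ℝ) (hs : s ≠ 0) (hsK : (∑ i, a i * s i) = 0) :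
    ∃ (r : ℕ) (v : Fin r → (Fin n → ℝ)),
      s = (∑ t, v t) ∧
      ∀ t, ((univ.filter fun i => v t i ≠ 0).card ≤ 2) ∧
        (∑ i, a i * v t i) = 0 ∧
        (∀ i, s i = 0 → v t i = 0) ∧
        (∀ i, 0 ≤ v t i * s i) := by
  exact stmt_10_aux n a ha _ s le_rfl hsK
end

section
/- Let h : ℝⁿ → ℝ be of the form h(x) = Σ_j h_j(x_j) with each h_j : ℝ → ℝ convex. Let d = Σ_{t=1}^r d^t where each nonzero d^t is conformal to d (supp(d^t) ⊆ supp(d) and d^t_j d_j ≥ 0 for all j). Then h(x + d) − h(x) ≥ Σ_{t=1}^r (h(x + d^t) − h(x)) for all x in the domain. -/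
lemma onedim (f : ℝ → ℝ) (hf : ConvexOn ℝ Set.univ f) (x a : ℝ)
    (r : ℕ) (as : Fin r → ℝ) (ha : a = ∑ t, as t)
    (hsign : ∀ t, 0 ≤ as t * a) (hzero : a = 0 → ∀ t, as t = 0) :
    ∑ t, (f (x + as t) - f x) ≤ f (x + a) - f x := by
  rcases eq_or_ne a 0 with h0 | h0
  · have : ∀ t, as t = 0 := hzero h0
    simp [this, h0]
  · have key : ∀ t, f (x + as t) - f x ≤ (as t / a) * (f (x + a) - f x) := by
      intro t
      have hl0 : 0 ≤ as t / a := by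
        rcases lt_or_gt_of_ne h0 with hn | hp
        · have : as t ≤ 0 := nonpos_of_mul_nonneg_right (mul_comm (as t) a ▸ hsign t) hn
          rw [div_nonneg_iff]; right; exact ⟨this, hn.le⟩
        · have : 0 ≤ as t := nonneg_of_mul_nonneg_right (mul_comm (as t) a ▸ hsign t) hp
          exact div_nonneg this hp.le
      have hl1 : as t / a ≤ 1 := by
        rcases lt_or_gt_of_ne h0 with hn | hp
        · have h1 : ∀ s, as s ≤ 0 := fun s => nonpos_of_mul_nonneg_right (mul_comm (as s) a ▸ hsign s) hn
          have h2 := Finset.single_le_sum (f := fun s => -as s)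
            (fun s _ => neg_nonneg.2 (h1 s)) (Finset.mem_univ t)
          simp only [Finset.sum_neg_distrib] at h2
          rw [← ha] at h2
          rw [div_le_one_iff]; right; right; exact ⟨hn, by linarith⟩
        · have h1 : ∀ s, 0 ≤ as s := fun s => nonneg_of_mul_nonneg_right (mul_comm (as s) a ▸ hsign s) hp
          have : as t ≤ a := ha ▸ Finset.single_le_sum (f := as) (fun s _ => h1 s) (Finset.mem_univ t)
          exact div_le_one_of_le₀ this hp.le
      set μ := as t / a with hμ
      have hx : x + as t = (1 - μ) • x + μ • (x + a) := by
        rw [hμ]; simp only [smul_eq_mul]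
        linear_combination (-1 : ℝ) * (div_mul_cancel₀ (as t) h0 : as t / a * a = as t)
      have := hf.2 (Set.mem_univ x) (Set.mem_univ (x + a))
        (sub_nonneg.2 hl1) hl0 (by ring)
      rw [← hx] at this
      simp only [smul_eq_mul] at this
      nlinarith
    calc ∑ t, (f (x + as t) - f x) ≤ ∑ t, (as t / a) * (f (x + a) - f x) :=
          Finset.sum_le_sum (fun t _ => key t)
      _ = f (x + a) - f x := by
          rw [← Finset.sum_mul, ← Finset.sum_div, ← ha, div_self h0, one_mul]


/-- Tseng–Yun separable-function inequality: for a separable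
convex function h(x) = Σ_j h_j(x_j) and a conformal decomposition d = Σ_t dᵗ,
one has h(x + d) − h(x) ≥ Σ_t (h(x + dᵗ) − h(x)). -/
theorem stmt_11 (n : ℕ) (hj : Fin n → ℝ → ℝ)
    (hconvex : ∀ j, ConvexOn ℝ Set.univ (hj j))
    (h : (Fin n → ℝ) → ℝ) (hh : ∀ x, h x = ∑ j, hj j (x j))
    (r : ℕ) (d : Fin n → ℝ) (ds : Fin r → (Fin n → ℝ))
    (hsum : d = ∑ t, ds t)
    (hconf : ∀ t, ds t ≠ 0 →
      (∀ j, d j = 0 → ds t j = 0) ∧ (∀ j, 0 ≤ ds t j * d j)) :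
    ∀ x : Fin n → ℝ, h (x + d) - h x ≥ ∑ t, (h (x + ds t) - h x) := by
  intro x
  have hd : ∀ j, d j = ∑ t, ds t j := by
    intro j; rw [hsum]; simp
  have hsign : ∀ j t, 0 ≤ ds t j * d j := by
    intro j t
    rcases eq_or_ne (ds t) 0 with h0 | h0
    · simp [h0]
    · exact (hconf t h0).2 j
  have hzero : ∀ j, d j = 0 → ∀ t, ds t j = 0 := by
    intro j hj0 t
    rcases eq_or_ne (ds t) 0 with h0 | h0
    · simp [h0]
    · exact (hconf t h0).1 j hj0
  simp only [hh, ge_iff_le, Pi.add_apply]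
  calc ∑ t, ((∑ j, hj j (x j + ds t j)) - ∑ j, hj j (x j))
      = ∑ j, ∑ t, (hj j (x j + ds t j) - hj j (x j)) := by
        rw [Finset.sum_comm]
        exact Finset.sum_congr rfl fun t _ => (Finset.sum_sub_distrib _ _).symm
    _ ≤ ∑ j, (hj j (x j + d j) - hj j (x j)) :=
        Finset.sum_le_sum fun j _ =>
          onedim (hj j) (hconvex j) (x j) (d j) r (fun t => ds t j)
            (hd j) (hsign j) (hzero j)
    _ = (∑ j, hj j (x j + d j)) - ∑ j, hj j (x j) := Finset.sum_sub_distrib _ _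
end

section
/- Let x ∈ P, J ⊆ [n], and let u (with corresponding d = u − x_J) satisfy the KKT conditions of the subproblem: L·d + ∇_J f(x) + λ a_J − γ + δ = 0 with γ, δ ≥ 0, γ_j(u_j − e_j) = 0, δ_j(g_j − u_j) = 0 for j ∈ J, e_J ≤ u ≤ g_J, and ⟨a_J, d⟩ = 0. If moreover f(x + d_J) ≤ f(x) + ⟨∇_J f(x), d⟩ + (L/2)‖d‖² (the descent inequality), then f(x + d_J) ≤ f(x) − (L/2)‖d‖² − γᵀ(x_J − e_J) − δᵀ(g_J − x_J) ≤ f(x). -/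
/-- the KKT conditions of the subproblem plus the descent
inequality yield f(x + d_J) ≤ f(x) − (L/2)‖d‖² − γᵀ(x_J − e_J) − δᵀ(g_J − x_J)
≤ f(x). Here d is supported on J, grad stands for ∇f(x), gv for the upper
bound vector g. -/
theorem stmt_14 (n : ℕ) (J : Finset (Fin n)) (f : (Fin n → ℝ) → ℝ)
    (a e gv : Fin n → ℝ) (b : ℝ) (grad : Fin n → ℝ) (L : ℝ) (hL : 0 < L)
    (x : Fin n → ℝ) (hxP : (∑ i, a i * x i) = b ∧ ∀ i, e i ≤ x i ∧ x i ≤ gv i)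
    (u d : Fin n → ℝ)
    (hd : ∀ j ∈ J, d j = u j - x j) (hd0 : ∀ j, j ∉ J → d j = 0)
    (lam : ℝ) (γ δ : Fin n → ℝ)
    (hγ : ∀ j ∈ J, 0 ≤ γ j) (hδ : ∀ j ∈ J, 0 ≤ δ j)
    (hstat : ∀ j ∈ J, L * d j + grad j + lam * a j - γ j + δ j = 0)
    (hcγ : ∀ j ∈ J, γ j * (u j - e j) = 0)
    (hcδ : ∀ j ∈ J, δ j * (gv j - u j) = 0)
    (hbox : ∀ j ∈ J, e j ≤ u j ∧ u j ≤ gv j)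
    (had : (∑ j ∈ J, a j * d j) = 0)
    (hdesc : f (x + d) ≤ f x + (∑ j ∈ J, grad j * d j) +
      L / 2 * ∑ j ∈ J, d j ^ 2) :
    f (x + d) ≤ f x - L / 2 * (∑ j ∈ J, d j ^ 2)
        - (∑ j ∈ J, γ j * (x j - e j)) - (∑ j ∈ J, δ j * (gv j - x j)) ∧
    f (x + d) ≤ f x := by
  have h1 : ∀ j ∈ J, grad j * d j =
      -(L * d j ^ 2) - lam * (a j * d j) - γ j * (x j - e j) - δ j * (gv j - x j) := by
    intro j hj
    linear_combination (d j) * hstat j hj + hcγ j hj + hcδ j hj +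
      (γ j - δ j) * hd j hj
  have hsum : (∑ j ∈ J, grad j * d j) =
      -(L * ∑ j ∈ J, d j ^ 2) - (∑ j ∈ J, γ j * (x j - e j))
        - (∑ j ∈ J, δ j * (gv j - x j)) := by
    rw [Finset.sum_congr rfl h1, Finset.sum_sub_distrib, Finset.sum_sub_distrib,
      Finset.sum_sub_distrib, ← Finset.mul_sum, had, Finset.sum_neg_distrib,
      ← Finset.mul_sum]
    ring
  have hmain : f (x + d) ≤ f x - L / 2 * (∑ j ∈ J, d j ^ 2)
      - (∑ j ∈ J, γ j * (x j - e j)) - (∑ j ∈ J, δ j * (gv j - x j)) := by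
    rw [hsum] at hdesc; linarith
  refine ⟨hmain, ?_⟩
  have h2 : 0 ≤ ∑ j ∈ J, d j ^ 2 := Finset.sum_nonneg fun j _ => sq_nonneg _
  have h3 : 0 ≤ ∑ j ∈ J, γ j * (x j - e j) :=
    Finset.sum_nonneg fun j hj => mul_nonneg (hγ j hj) (by linarith [(hxP.2 j).1])
  have h4 : 0 ≤ ∑ j ∈ J, δ j * (gv j - x j) :=
    Finset.sum_nonneg fun j hj => mul_nonneg (hδ j hj) (by linarith [(hxP.2 j).2])
  nlinarith
end
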